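/- An Archimedean vector lattice X has the countable supremum property if and only if every order bounded disjoint subset of X \ {0} is countable. -/

import Mathlib

/-- The countable supremum property: every set with infimum `0` has a countable
subset with infimum `0`. -/
def CountableSupProperty (X : Type*) [AddCommGroup X] [Lattice X] : Prop :=
  ∀ A : Set X, IsGLB A 0 → ∃ B ⊆ A, B.Countable ∧ IsGLB B 0

section Aux
variable {X : Type*} [AddCommGroup X] [Lattice X] [CovariantClass X X (· + ·) (· ≤ ·)]

def auxOACG (X : Type*) [AddCommGroup X] [Lattice X]
    [CovariantClass X X (· + ·) (· ≤ ·)] : IsOrderedAddMonoid X :=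
  { add_le_add_left := fun _ _ h c => by
      rw [add_comm _ c, add_comm _ c]; exact add_le_add_right h c }

attribute [local instance] auxOACG

lemma aux_sub_inf_posPart (a b : X) : a - a ⊓ b = (a - b)⁺ := by
  rw [sub_inf, sub_self, sup_comm, ← posPart_def]

lemma aux_inf_eq (a b : X) : a ⊓ b = a - (a - b)⁺ := by
  rw [← aux_sub_inf_posPart]; abel

lemma aux_inf_add_le {a x b : X} (ha : 0 ≤ a) (hx : 0 ≤ x) (hb : 0 ≤ b) :
    a ⊓ (x + b) ≤ a ⊓ x + a ⊓ b := by
  have h1 : a ⊓ (x + b) - a ⊓ b ≤ a ⊓ x := by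
    rw [sub_inf]
    refine sup_le (le_trans (sub_nonpos.mpr inf_le_left) (le_inf ha hx)) (le_inf ?_ ?_)
    · exact le_trans (sub_le_sub_right inf_le_left b) (sub_le_self a hb)
    · exact sub_le_iff_le_add.mpr inf_le_right
  exact sub_le_iff_le_add.mp h1

lemma aux_inf_nsmul {a b : X} (ha : 0 ≤ a) (hb : 0 ≤ b) (h : a ⊓ b = 0) :
    ∀ k : ℕ, a ⊓ k • b = 0 := by
  intro k
  induction k with
  | zero => simpa using inf_eq_right.mpr ha
  | succ m ih =>
    have hmb : 0 ≤ m • b := nsmul_nonneg hb m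
    have hle : a ⊓ (m • b + b) ≤ a ⊓ (m • b) + a ⊓ b := aux_inf_add_le ha hmb hb
    rw [ih, h, add_zero] at hle
    rw [succ_nsmul]
    exact le_antisymm hle (le_inf ha (add_nonneg hmb hb))

lemma aux_backward [Module ℝ X] [PosSMulMono ℝ X]
    (harch : ∀ x y : X, (∀ n : ℕ, n • x ≤ y) → x ≤ 0)
    (hcnt : ∀ D : Set X, (0 : X) ∉ D →
        (∀ x ∈ D, ∀ y ∈ D, x ≠ y → |x| ⊓ |y| = 0) →
        (∃ u : X, D ⊆ Set.Icc (-u) u) → D.Countable) :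
    CountableSupProperty X := by
  classical
  intro A hA
  rcases A.eq_empty_or_nonempty with rfl | ⟨u, huA⟩
  · exact ⟨∅, subset_rfl, Set.countable_empty, hA⟩
  have h0lb : (0 : X) ∈ lowerBounds A := hA.1
  have hu0 : 0 ≤ u := h0lb huA
  set C : Set X := (fun a => u - a ⊓ u) '' A with hC
  have hC0 : ∀ c ∈ C, 0 ≤ c ∧ c ≤ u := by
    rintro c ⟨a, ha, rfl⟩
    exact ⟨sub_nonneg.mpr inf_le_right, sub_le_self u (le_inf (h0lb ha) hu0)⟩
  have hClub : IsLUB C u := by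
    constructor
    · intro c hc; exact (hC0 c hc).2
    · intro v hv
      have hlb : u - v ∈ lowerBounds A := by
        intro a ha
        have h1 : u - a ⊓ u ≤ v := hv ⟨a, ha, rfl⟩
        exact le_trans (sub_le_comm.mp h1) inf_le_left
      exact sub_nonpos.mp (hA.2 hlb)
  have h0C : (0 : X) ∈ C := ⟨u, huA, by simp⟩
  -- maximal disjoint families of components
  have hzorn : ∀ n : ℕ, ∃ D₀ ∈ {D : Set X |
        (∀ d ∈ D, d ≠ 0 ∧ 0 ≤ d ∧ ∃ c ∈ C, d ≤ (c - u + ((n : ℝ))⁻¹ • u)⁺) ∧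
        ∀ x ∈ D, ∀ y ∈ D, x ≠ y → x ⊓ y = 0},
      ∀ s ∈ {D : Set X |
        (∀ d ∈ D, d ≠ 0 ∧ 0 ≤ d ∧ ∃ c ∈ C, d ≤ (c - u + ((n : ℝ))⁻¹ • u)⁺) ∧
        ∀ x ∈ D, ∀ y ∈ D, x ≠ y → x ⊓ y = 0}, D₀ ⊆ s → s = D₀ := by
    intro n
    have hch : ∀ c ⊆ {D : Set X |
        (∀ d ∈ D, d ≠ 0 ∧ 0 ≤ d ∧ ∃ c ∈ C, d ≤ (c - u + ((n : ℝ))⁻¹ • u)⁺) ∧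
        ∀ x ∈ D, ∀ y ∈ D, x ≠ y → x ⊓ y = 0}, IsChain (· ⊆ ·) c →
        ∃ ub ∈ {D : Set X |
        (∀ d ∈ D, d ≠ 0 ∧ 0 ≤ d ∧ ∃ c ∈ C, d ≤ (c - u + ((n : ℝ))⁻¹ • u)⁺) ∧
        ∀ x ∈ D, ∀ y ∈ D, x ≠ y → x ⊓ y = 0}, ∀ s ∈ c, s ⊆ ub := by
      intro c hc hchain
      refine ⟨⋃₀ c, ⟨?_, ?_⟩, fun s hs => Set.subset_sUnion_of_mem hs⟩
      · rintro d ⟨s, hs, hds⟩; exact (hc hs).1 d hds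
      · rintro x ⟨s, hs, hxs⟩ y ⟨s', hs', hys'⟩ hxy
        rcases hchain.total hs hs' with h | h
        · exact (hc hs').2 x (h hxs) y hys' hxy
        · exact (hc hs).2 x hxs y (h hys') hxy
    obtain ⟨m, hm⟩ := zorn_subset _ hch
    exact ⟨m, hm.prop, fun s hs hms => hm.eq_of_ge hs hms⟩
  choose Dn hDnP hDnmax using hzorn
  have hDnmem : ∀ n, ∀ d ∈ Dn n, d ≠ 0 ∧ 0 ≤ d ∧
      ∃ c ∈ C, d ≤ (c - u + ((n : ℝ))⁻¹ • u)⁺ := fun n => (hDnP n).1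
  have hDndisj : ∀ n, ∀ x ∈ Dn n, ∀ y ∈ Dn n, x ≠ y → x ⊓ y = 0 := fun n => (hDnP n).2
  -- bound for the components
  have hple : ∀ (n : ℕ), ∀ c ∈ C, (c - u + ((n : ℝ))⁻¹ • u)⁺ ≤ ((n : ℝ))⁻¹ • u := by
    intro n c hc
    have hru : (0 : X) ≤ ((n : ℝ))⁻¹ • u :=
      smul_nonneg (inv_nonneg.mpr (Nat.cast_nonneg n)) hu0
    have h1 : c - u + ((n : ℝ))⁻¹ • u ≤ ((n : ℝ))⁻¹ • u := by
      have h2 := sub_nonpos.mpr (hC0 c hc).2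
      calc c - u + ((n : ℝ))⁻¹ • u ≤ 0 + ((n : ℝ))⁻¹ • u := add_le_add_left h2 _
        _ = ((n : ℝ))⁻¹ • u := zero_add _
    calc (c - u + ((n : ℝ))⁻¹ • u)⁺ ≤ (((n : ℝ))⁻¹ • u)⁺ := posPart_mono h1
      _ = ((n : ℝ))⁻¹ • u := posPart_eq_self.mpr hru
  have hinvle : ∀ n : ℕ, ((n : ℝ))⁻¹ • u ≤ u := by
    intro n
    have h1 : ((n : ℝ))⁻¹ ≤ 1 := by
      rcases n with _ | m
      · norm_num
      · rw [inv_le_one_iff₀]; right; exact_mod_cast Nat.one_le_iff_ne_zero.mpr (by omega)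
    have h2 : (0 : X) ≤ (1 - ((n : ℝ))⁻¹) • u := smul_nonneg (by linarith) hu0
    calc ((n : ℝ))⁻¹ • u = u - (1 - ((n : ℝ))⁻¹) • u := by
          rw [sub_smul, one_smul]; abel
      _ ≤ u := sub_le_self u h2
  -- countability of the maximal families
  have hDcnt : ∀ n, (Dn n).Countable := by
    intro n
    refine hcnt (Dn n) (fun h0 => (hDnmem n 0 h0).1 rfl) ?_ ⟨u, ?_⟩
    · intro x hx y hy hxy
      rw [abs_of_nonneg (hDnmem n x hx).2.1, abs_of_nonneg (hDnmem n y hy).2.1]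
      exact hDndisj n x hx y hy hxy
    · intro d hd
      obtain ⟨hne, hd0, c, hcC, hdle⟩ := hDnmem n d hd
      exact ⟨le_trans (neg_nonpos.mpr hu0) hd0,
        le_trans hdle (le_trans (hple n c hcC) (hinvle n))⟩
  -- witnesses
  choose! g hgC hgle using fun n d (hd : d ∈ Dn n) => (hDnmem n d hd).2.2
  set BC : Set X := insert (0 : X) (⋃ n : ℕ, g n '' Dn n) with hBC
  have hBCc : BC.Countable :=
    (Set.countable_iUnion (fun n => (hDcnt n).image (g n))).insert 0
  have hBCsub : BC ⊆ C := by
    rintro c (rfl | hc)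
    · exact h0C
    · obtain ⟨n, hn⟩ := Set.mem_iUnion.mp hc
      obtain ⟨d, hd, rfl⟩ := hn
      exact hgC n d hd
  have hBClub : IsLUB BC u := by
    constructor
    · intro c hc; exact (hC0 c (hBCsub hc)).2
    · intro v hv
      by_contra huv
      have hv0 : (0 : X) ≤ v := hv (Set.mem_insert 0 _)
      set w : X := u - v ⊓ u with hw
      have hw0 : 0 ≤ w := sub_nonneg.mpr inf_le_right
      have hwu : w ≤ u := sub_le_self u (le_inf hv0 hu0)
      have hwne : w ≠ 0 := by
        intro h
        exact huv (le_trans (le_of_eq (sub_eq_zero.mp h)) inf_le_left)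
      -- find the Archimedean level n
      have hn : ∃ n : ℕ, n ≠ 0 ∧ (w - ((n : ℝ))⁻¹ • u)⁺ ≠ 0 := by
        by_contra hno
        push_neg at hno
        have hall : ∀ m : ℕ, m • w ≤ u := by
          intro m
          rcases Nat.eq_zero_or_pos m with rfl | hm
          · simpa using hu0
          · have h1 : (w - ((m : ℝ))⁻¹ • u)⁺ = 0 := hno m (by omega)
            have h2 : w ≤ ((m : ℝ))⁻¹ • u := sub_nonpos.mp (posPart_eq_zero.mp h1)
            have hm0 : ((m : ℝ)) ≠ 0 := Nat.cast_ne_zero.mpr (by omega)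
            have h3 : ((m : ℝ)) • w ≤ ((m : ℝ)) • (((m : ℝ))⁻¹ • u) :=
              smul_le_smul_of_nonneg_left h2 (Nat.cast_nonneg m)
            rw [smul_smul, mul_inv_cancel₀ hm0, one_smul] at h3
            rwa [← Nat.cast_smul_eq_nsmul ℝ]
        exact hwne (le_antisymm (harch w u hall) hw0)
      obtain ⟨n, hn0, hw1ne⟩ := hn
      have hr0 : (0 : ℝ) ≤ ((n : ℝ))⁻¹ := inv_nonneg.mpr (Nat.cast_nonneg n)
      have hru0 : (0 : X) ≤ ((n : ℝ))⁻¹ • u := smul_nonneg hr0 hu0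
      set w1 : X := (w - ((n : ℝ))⁻¹ • u)⁺ with hw1
      have hw10 : 0 ≤ w1 := posPart_nonneg _
      have hw1u : w1 ≤ u := by
        calc w1 ≤ w⁺ := posPart_mono (sub_le_self w hru0)
          _ = w := posPart_eq_self.mpr hw0
          _ ≤ u := hwu
      -- key subclaim: some component meets w1
      have hkey : ∃ c ∈ C, w1 ⊓ (c - u + ((n : ℝ))⁻¹ • u)⁺ ≠ 0 := by
        by_contra hno
        push_neg at hno
        have hub : u - ((n : ℝ))⁻¹ • u + (((n : ℝ))⁻¹ • u - w1)⁺ ∈ upperBounds C := by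
          intro c hc
          have h0 : (c - u + ((n : ℝ))⁻¹ • u)⁺ ⊓ w1 = 0 := by
            rw [inf_comm]; exact hno c hc
          have h1 : (c - u + ((n : ℝ))⁻¹ • u)⁺ = ((c - u + ((n : ℝ))⁻¹ • u)⁺ - w1)⁺ := by
            have := aux_sub_inf_posPart ((c - u + ((n : ℝ))⁻¹ • u)⁺) w1
            rw [h0, sub_zero] at this
            exact this
          have h2 : (c - u + ((n : ℝ))⁻¹ • u)⁺ ≤ (((n : ℝ))⁻¹ • u - w1)⁺ := by
            rw [h1]
            exact posPart_mono (sub_le_sub_right (hple n c hc) w1)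
          have h3 : c ≤ u - ((n : ℝ))⁻¹ • u + (c - u + ((n : ℝ))⁻¹ • u)⁺ := by
            have h4 : c - (u - ((n : ℝ))⁻¹ • u) ≤ (c - u + ((n : ℝ))⁻¹ • u)⁺ := by
              have h5 : c - (u - ((n : ℝ))⁻¹ • u) = c - u + ((n : ℝ))⁻¹ • u := by abel
              rw [h5, posPart_def]; exact le_sup_left
            exact sub_le_iff_le_add'.mp h4
          exact le_trans h3 (add_le_add_right h2 _)
        have h4 : u ≤ u - ((n : ℝ))⁻¹ • u + (((n : ℝ))⁻¹ • u - w1)⁺ := hClub.2 hub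
        have h5 : ((n : ℝ))⁻¹ • u ≤ (((n : ℝ))⁻¹ • u - w1)⁺ := by
          have h6 := add_le_add_left h4 (((n : ℝ))⁻¹ • u - u)
          calc ((n : ℝ))⁻¹ • u = u + (((n : ℝ))⁻¹ • u - u) := by abel
            _ ≤ u - ((n : ℝ))⁻¹ • u + (((n : ℝ))⁻¹ • u - w1)⁺ + (((n : ℝ))⁻¹ • u - u) := h6
            _ = (((n : ℝ))⁻¹ • u - w1)⁺ := by abel
        have h6 : ((n : ℝ))⁻¹ • u ⊓ w1 = 0 := by
          refine le_antisymm ?_ (le_inf hru0 hw10)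
          rw [aux_inf_eq]
          exact sub_nonpos.mpr h5
        have h7 : w1 ⊓ (n • (((n : ℝ))⁻¹ • u)) = 0 :=
          aux_inf_nsmul hw10 hru0 (by rw [inf_comm]; exact h6) n
        have h8 : (n : ℕ) • (((n : ℝ))⁻¹ • u) = u := by
          rw [← Nat.cast_smul_eq_nsmul ℝ, smul_smul,
            mul_inv_cancel₀ (Nat.cast_ne_zero.mpr hn0), one_smul]
        rw [h8] at h7
        exact hw1ne (by rw [← inf_eq_left.mpr hw1u]; exact h7)
      obtain ⟨c, hcC, hd0ne⟩ := hkey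
      -- the new candidate d0 must meet the maximal family
      have hd0P : w1 ⊓ (c - u + ((n : ℝ))⁻¹ • u)⁺ ≠ 0 ∧
          0 ≤ w1 ⊓ (c - u + ((n : ℝ))⁻¹ • u)⁺ ∧
          ∃ c' ∈ C, w1 ⊓ (c - u + ((n : ℝ))⁻¹ • u)⁺ ≤ (c' - u + ((n : ℝ))⁻¹ • u)⁺ :=
        ⟨hd0ne, le_inf hw10 (posPart_nonneg _), c, hcC, inf_le_right⟩
      set d0 : X := w1 ⊓ (c - u + ((n : ℝ))⁻¹ • u)⁺ with hd0
      have hdex : ∃ d ∈ Dn n, d0 ⊓ d ≠ 0 := by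
        by_cases hmem : d0 ∈ Dn n
        · exact ⟨d0, hmem, by rwa [inf_idem]⟩
        · by_contra hno
          push_neg at hno
          have hins : insert d0 (Dn n) ∈ {D : Set X |
              (∀ d ∈ D, d ≠ 0 ∧ 0 ≤ d ∧ ∃ c ∈ C, d ≤ (c - u + ((n : ℝ))⁻¹ • u)⁺) ∧
              ∀ x ∈ D, ∀ y ∈ D, x ≠ y → x ⊓ y = 0} := by
            constructor
            · rintro d (rfl | hd)
              · exact hd0P
              · exact hDnmem n d hd
            · rintro x (rfl | hx) y (rfl | hy) hxy
              · exact absurd rfl hxy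
              · exact hno y hy
              · rw [inf_comm]; exact hno x hx
              · exact hDndisj n x hx y hy hxy
          have heq := hDnmax n _ hins (Set.subset_insert d0 (Dn n))
          exact hmem (heq ▸ Set.mem_insert d0 (Dn n))
      obtain ⟨d, hdD, hdne⟩ := hdex
      have hd00 : 0 ≤ d0 := hd0P.2.1
      have hdnn : 0 ≤ d := (hDnmem n d hdD).2.1
      have hgv : g n d ≤ v ⊓ u :=
        le_inf (hv (Set.mem_insert_of_mem _ (Set.mem_iUnion.mpr ⟨n,
          Set.mem_image_of_mem _ hdD⟩))) (hC0 _ (hgC n d hdD)).2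
      have hdle2 : d ≤ (((n : ℝ))⁻¹ • u - w)⁺ := by
        calc d ≤ (g n d - u + ((n : ℝ))⁻¹ • u)⁺ := hgle n d hdD
          _ ≤ (v ⊓ u - u + ((n : ℝ))⁻¹ • u)⁺ :=
            posPart_mono (add_le_add_left (sub_le_sub_right hgv u) _)
          _ = (((n : ℝ))⁻¹ • u - w)⁺ := by congr 1; rw [hw]; abel
      have hd0le : d0 ≤ (w - ((n : ℝ))⁻¹ • u)⁺ := inf_le_left
      have hfin : d0 ⊓ d = 0 := by
        refine le_antisymm ?_ (le_inf hd00 hdnn)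
        have h9 : d0 ⊓ d ≤ (w - ((n : ℝ))⁻¹ • u)⁺ ⊓ (-(w - ((n : ℝ))⁻¹ • u))⁺ := by
          refine inf_le_inf hd0le ?_
          rw [neg_sub]; exact hdle2
        calc d0 ⊓ d ≤ (w - ((n : ℝ))⁻¹ • u)⁺ ⊓ (-(w - ((n : ℝ))⁻¹ • u))⁺ := h9
          _ = (w - ((n : ℝ))⁻¹ • u)⁺ ⊓ (w - ((n : ℝ))⁻¹ • u)⁻ := by
            rw [(posPart_def (-(w - ((n : ℝ))⁻¹ • u))).trans
              (negPart_def (w - ((n : ℝ))⁻¹ • u)).symm]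
          _ = 0 := posPart_inf_negPart_eq_zero _
      exact hdne hfin
  -- pull the countable set back to A
  have hchoose : ∀ c ∈ BC, ∃ a ∈ A, u - a ⊓ u = c := fun c hc => hBCsub hc
  choose! pa hpaA hpaf using hchoose
  refine ⟨insert u (pa '' BC), ?_, (hBCc.image pa).insert u, ?_, ?_⟩
  · refine Set.insert_subset huA ?_
    rintro x ⟨c, hc, rfl⟩
    exact hpaA c hc
  · intro b hb
    rcases hb with rfl | ⟨c, hc, rfl⟩
    · exact hu0
    · exact h0lb (hpaA c hc)
  · intro t ht
    have htu : t ≤ u := ht (Set.mem_insert u _)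
    have hub : u - t ∈ upperBounds BC := by
      intro c hc
      have h1 : t ≤ pa c := ht (Set.mem_insert_of_mem _ (Set.mem_image_of_mem _ hc))
      have h2 : t ≤ pa c ⊓ u := le_inf h1 htu
      calc c = u - pa c ⊓ u := (hpaf c hc).symm
        _ ≤ u - t := sub_le_sub_left h2 u
    have h3 : u ≤ u - t := hBClub.2 hub
    have h4 : u + t ≤ u := by
      have h5 := add_le_add_left h3 t
      calc u + t ≤ u - t + t := h5
        _ = u := by abel
    exact (add_le_iff_nonpos_right u).mp h4

lemma aux_inf_sum_zero {a : X} (ha : 0 ≤ a) (F : Finset X) (h0 : ∀ x ∈ F, 0 ≤ x)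
    (h : ∀ x ∈ F, a ⊓ x = 0) : a ⊓ ∑ x ∈ F, x = 0 := by
  classical
  induction F using Finset.induction_on with
  | empty => simpa using inf_eq_right.mpr ha
  | @insert e F he ih =>
    have hsum0 : 0 ≤ ∑ x ∈ F, x :=
      Finset.sum_nonneg (fun x hx => h0 x (Finset.mem_insert_of_mem hx))
    rw [Finset.sum_insert he]
    have hle : a ⊓ (e + ∑ x ∈ F, x) ≤ a ⊓ e + a ⊓ ∑ x ∈ F, x :=
      aux_inf_add_le ha (h0 e (Finset.mem_insert_self e F)) hsum0
    rw [h e (Finset.mem_insert_self e F),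
      ih (fun x hx => h0 x (Finset.mem_insert_of_mem hx))
        (fun x hx => h x (Finset.mem_insert_of_mem hx)), add_zero] at hle
    exact le_antisymm hle
      (le_inf ha (add_nonneg (h0 e (Finset.mem_insert_self e F)) hsum0))

lemma aux_sum_le {u : X} (F : Finset X) (h0 : ∀ x ∈ F, 0 ≤ x) (hu : ∀ x ∈ F, x ≤ u)
    (hd : ∀ x ∈ F, ∀ y ∈ F, x ≠ y → x ⊓ y = 0) (hune : 0 ≤ u) : ∑ x ∈ F, x ≤ u := by
  classical
  induction F using Finset.induction_on with
  | empty => simpa using hune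
  | @insert e F he ih =>
    have h0' : ∀ x ∈ F, 0 ≤ x := fun x hx => h0 x (Finset.mem_insert_of_mem hx)
    have hu' : ∀ x ∈ F, x ≤ u := fun x hx => hu x (Finset.mem_insert_of_mem hx)
    have hd' : ∀ x ∈ F, ∀ y ∈ F, x ≠ y → x ⊓ y = 0 := fun x hx y hy =>
      hd x (Finset.mem_insert_of_mem hx) y (Finset.mem_insert_of_mem hy)
    have hsle : ∑ x ∈ F, x ≤ u := ih h0' hu' hd'
    have hinf : e ⊓ ∑ x ∈ F, x = 0 := by
      refine aux_inf_sum_zero (h0 e (Finset.mem_insert_self e F)) F h0' (fun x hx => ?_)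
      exact hd e (Finset.mem_insert_self e F) x (Finset.mem_insert_of_mem hx)
        (fun hex => he (hex ▸ hx))
    rw [Finset.sum_insert he]
    calc e + ∑ x ∈ F, x = e ⊓ ∑ x ∈ F, x + (e ⊔ ∑ x ∈ F, x) := (inf_add_sup _ _).symm
      _ = e ⊔ ∑ x ∈ F, x := by rw [hinf, zero_add]
      _ ≤ u := sup_le (hu e (Finset.mem_insert_self e F)) hsle

lemma aux_abs_eq_zero {a : X} (h : |a| = 0) : a = 0 := by
  have h1 : a ≤ 0 := by rw [← h, abs]; exact le_sup_left
  have h2 : -a ≤ 0 := by rw [← h, abs]; exact le_sup_right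
  exact le_antisymm h1 (by simpa using h2)

lemma aux_forward [Module ℝ X] [PosSMulMono ℝ X]
    (harch : ∀ x y : X, (∀ n : ℕ, n • x ≤ y) → x ≤ 0)
    (hcsp : CountableSupProperty X)
    (D : Set X) (hD0 : (0 : X) ∉ D)
    (hdisj : ∀ x ∈ D, ∀ y ∈ D, x ≠ y → |x| ⊓ |y| = 0)
    (hbd : ∃ u : X, D ⊆ Set.Icc (-u) u) : D.Countable := by
  classical
  obtain ⟨u, hDu⟩ := hbd
  by_contra hunc
  set E : Set X := abs '' D with hE
  -- facts about E
  have hEmem : ∀ e ∈ E, 0 ≤ e ∧ e ≤ u ∧ e ≠ 0 := by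
    rintro e ⟨d, hd, rfl⟩
    obtain ⟨h1, h2⟩ := hDu hd
    refine ⟨abs_nonneg d, ?_, fun h => hD0 (aux_abs_eq_zero h ▸ hd)⟩
    rw [abs]; exact sup_le h2 (neg_le.mp h1)
  have hEdisj : ∀ x ∈ E, ∀ y ∈ E, x ≠ y → x ⊓ y = 0 := by
    rintro x ⟨d, hd, rfl⟩ y ⟨d', hd', rfl⟩ hxy
    exact hdisj d hd d' hd' (fun h => hxy (by rw [h]))
  have hinj : Set.InjOn abs D := by
    intro x hx y hy hxy
    by_contra hne
    have := hdisj x hx y hy hne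
    rw [hxy, inf_idem] at this
    exact hD0 (aux_abs_eq_zero this ▸ hy)
  have hEunc : ¬ E.Countable := fun h => hunc (Set.countable_of_injective_of_countable_image hinj h)
  have hEne : E.Nonempty :=
    Set.nonempty_iff_ne_empty.mpr (fun h => hEunc (h ▸ Set.countable_empty))
  have hu0 : 0 ≤ u := by
    obtain ⟨e, he⟩ := hEne
    exact le_trans (hEmem e he).1 (hEmem e he).2.1
  -- the set of finite sums of elements of E
  set S : Set X := { s | ∃ F : Finset X, ↑F ⊆ E ∧ s = ∑ x ∈ F, x } with hS
  have hsum_le : ∀ F : Finset X, ↑F ⊆ E → ∑ x ∈ F, x ≤ u := by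
    intro F hFE
    refine aux_sum_le F (fun x hx => (hEmem x (hFE hx)).1)
      (fun x hx => (hEmem x (hFE hx)).2.1)
      (fun x hx y hy hxy => hEdisj x (hFE hx) y (hFE hy) hxy) hu0
  have huW : u ∈ upperBounds S := by
    rintro s ⟨F, hFE, rfl⟩; exact hsum_le F hFE
  set A : Set X := { x | ∃ w ∈ upperBounds S, ∃ s ∈ S, x = w - s } with hA
  have hAglb : IsGLB A 0 := by
    constructor
    · rintro x ⟨w, hw, s, hs, rfl⟩
      exact sub_nonneg.mpr (hw hs)
    · intro t ht
      have key : ∀ k : ℕ, u - k • t ∈ upperBounds S := by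
        intro k
        induction k with
        | zero => simpa using huW
        | succ m ih =>
          intro s hs
          have hts : t ≤ (u - m • t) - s := ht ⟨u - m • t, ih, s, hs, rfl⟩
          have h2 : s ≤ (u - m • t) - t := by
            have h3 : t + s ≤ u - m • t := by
              have := add_le_add_left hts s
              simpa [sub_add_cancel] using this
            exact le_sub_iff_add_le'.mpr h3
          calc s ≤ u - m • t - t := h2
            _ = u - (m + 1) • t := by rw [succ_nsmul]; abel
      have h0S : (0 : X) ∈ S := ⟨∅, by simp, by simp⟩
      have : ∀ k : ℕ, k • t ≤ u := by
        intro k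
        have := key k h0S
        simpa using this
      exact harch t u this
  obtain ⟨B, hBA, hBc, hBglb⟩ := hcsp A hAglb
  -- choose decompositions for members of B
  have hBdec : ∀ b ∈ B, ∃ F : Finset X, ↑F ⊆ E ∧ ∃ w ∈ upperBounds S, b = w - ∑ x ∈ F, x := by
    intro b hb
    obtain ⟨w, hw, s, ⟨F, hFE, rfl⟩, rfl⟩ := hBA hb
    exact ⟨F, hFE, w, hw, rfl⟩
  choose! F hFE w hwub heq using hBdec
  have hBsub : Countable B := hBc.to_subtype
  set T : Set X := ⋃ b : B, (F b : Set X) with hT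
  have hTc : T.Countable := Set.countable_iUnion (fun b => (F (b : X)).finite_toSet.countable)
  have hETdiff : (E \ T).Nonempty := by
    rw [Set.nonempty_iff_ne_empty]
    intro h
    exact hEunc (Set.Countable.mono (Set.diff_eq_empty.mp h) hTc)
  obtain ⟨e, heE, heT⟩ := hETdiff
  have helb : e ∈ lowerBounds B := by
    intro b hb
    have heFb : e ∉ F b := by
      intro h
      exact heT (Set.mem_iUnion.mpr ⟨⟨b, hb⟩, h⟩)
    have hFb' : ↑(insert e (F b)) ⊆ E := by
      rw [Finset.coe_insert]
      exact Set.insert_subset heE (hFE b hb)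
    have hsum : e + ∑ x ∈ F b, x ≤ w b := by
      have : (∑ x ∈ insert e (F b), x) ≤ w b :=
        hwub b hb ⟨insert e (F b), hFb', rfl⟩
      rwa [Finset.sum_insert heFb] at this
    rw [heq b hb]
    exact le_sub_iff_add_le'.mpr (by rwa [add_comm] at hsum)
  have he0 : e ≤ 0 := hBglb.2 helb
  have := (hEmem e heE).2.2
  exact this (le_antisymm he0 (hEmem e heE).1)

end Aux

theorem stmt4 {X : Type*} [AddCommGroup X] [Lattice X]
    [CovariantClass X X (· + ·) (· ≤ ·)] [Module ℝ X] [PosSMulMono ℝ X]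
    (harch : ∀ x y : X, (∀ n : ℕ, n • x ≤ y) → x ≤ 0) :
    CountableSupProperty X ↔
      ∀ D : Set X, (0 : X) ∉ D →
        (∀ x ∈ D, ∀ y ∈ D, x ≠ y → |x| ⊓ |y| = 0) →
        (∃ u : X, D ⊆ Set.Icc (-u) u) →
        D.Countable := by
  constructor
  · intro hcsp D hD0 hdisj hbd
    exact aux_forward harch hcsp D hD0 hdisj hbd
  · intro h
    exact aux_backward harch h
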